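/- Let p, ν ∈ ℕ₀ with ν ≤ p, and suppose q_{p,ν} ∈ Λ_{p−ν}^{p+ν+1} satisfies q_{p,ν}(1) = 1, q_{p,ν}(−1) = 0 and q_{p,ν}^{(i)}(±1) = 0 for i = 1,…,ν. If u ∈ H^{ν+1}(Ω) satisfies u^{(ν+1)} = q_{p,ν}, then the trace bound is attained with equality: |(u − π_p u)^{(ν)}(1)| = ‖q_{p,ν}‖₀ · |u|_{ν+1}. -/

import Mathlib

open MeasureTheory Polynomial

noncomputable section

/-- The Legendre polynomial of degree `n`, via Rodrigues' formula. -/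
def leg (n : ℕ) : Polynomial ℝ :=
  ((1 : ℝ) / (2 ^ n * n.factorial)) • derivative^[n] ((X ^ 2 - 1) ^ n)

/-- The closed interval `Ω̄ = [-1, 1]`. -/
def Iom : Set ℝ := Set.Icc (-1 : ℝ) 1

/-- Squared `L²(Ω)` norm. -/
def nsq (f : ℝ → ℝ) : ℝ := ∫ x in Iom, f x ^ 2

/-- The `L²(Ω)` inner product. -/
def ip (f g : ℝ → ℝ) : ℝ := ∫ x in Iom, f x * g x

/-- Membership in the Sobolev space `H^k(Ω)` (strong form). -/
def MemH (k : ℕ) (w : ℝ → ℝ) : Prop := ContDiffOn ℝ k w Iom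

/-- The squared Sobolev seminorm `|w|_k² = ‖w^{(k)}‖₀²`. -/
def semSq (k : ℕ) (w : ℝ → ℝ) : ℝ := nsq (iteratedDerivWithin k w Iom)

/-- `P` coincides with a polynomial of degree `≤ p`. -/
def IsPolyDeg (p : ℕ) (P : ℝ → ℝ) : Prop :=
  ∃ q : Polynomial ℝ, q.natDegree ≤ p ∧ ∀ x, P x = q.eval x

/-- `P = π_p w` is the `L²(Ω)` projection of `w` onto polynomials of degree `≤ p`. -/
def IsL2Proj (p : ℕ) (w P : ℝ → ℝ) : Prop :=
  IsPolyDeg p P ∧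
    ∀ v : Polynomial ℝ, v.natDegree ≤ p → ∫ x in Iom, (P x - w x) * v.eval x = 0

/-- `ψ_{i,n}`: the `n`-th primitive of the Legendre polynomial `L_i`. -/
def psi (i : ℕ) : ℕ → ℝ → ℝ
  | 0 => fun x => (leg i).eval x
  | n + 1 => fun x => ∫ t in (-1 : ℝ)..x, psi i n t

/-- `f ∈ Λ_i^j = span{L_i, …, L_j}`. -/
def inLegSpan (i j : ℕ) (f : ℝ → ℝ) : Prop :=
  ∃ c : ℕ → ℝ, ∀ x, f x = ∑ m ∈ Finset.Icc i j, c m * (leg m).eval x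

/-- The defining properties of `q_{p,ν}`. -/
def IsQ (p ν : ℕ) (q : ℝ → ℝ) : Prop :=
  inLegSpan (p - ν) (p + ν + 1) q ∧ q 1 = 1 ∧ q (-1) = 0 ∧
    ∀ i, 1 ≤ i → i ≤ ν → iteratedDeriv i q 1 = 0 ∧ iteratedDeriv i q (-1) = 0

/-- Recursive construction of `q_{p,ν}`. -/
def qrec (p : ℕ) : ℕ → ℝ → ℝ
  | 0 => fun x => ((leg p).eval x + (leg (p + 1)).eval x) / 2
  | ν + 1 => fun x =>
      qrec p ν x
        + (-(iteratedDeriv (ν + 1) (qrec p ν) 1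
              + (-1 : ℝ) ^ p * iteratedDeriv (ν + 1) (qrec p ν) (-1)) / 2) * psi p (ν + 1) x
        + (-(iteratedDeriv (ν + 1) (qrec p ν) 1
              - (-1 : ℝ) ^ p * iteratedDeriv (ν + 1) (qrec p ν) (-1)) / 2) * psi (p + 1) (ν + 1) x

/-- The coefficient `α_{p,ν}` of the recursive construction. -/
def alphaC (p ν : ℕ) : ℝ :=
  -(iteratedDeriv ν (qrec p (ν - 1)) 1 + (-1 : ℝ) ^ p * iteratedDeriv ν (qrec p (ν - 1)) (-1)) / 2

/-- The coefficient `β_{p,ν}` of the recursive construction. -/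
def betaC (p ν : ℕ) : ℝ :=
  -(iteratedDeriv ν (qrec p (ν - 1)) 1 - (-1 : ℝ) ^ p * iteratedDeriv ν (qrec p (ν - 1)) (-1)) / 2

end

section Aux

open Polynomial MeasureTheory intervalIntegral Set Function

private lemma contDiff_polyeval (P : Polynomial ℝ) {n : ℕ∞} :
    ContDiff ℝ n (fun x : ℝ => P.eval x) := by
  induction P using Polynomial.induction_on' with
  | add p q hp hq => simpa [Polynomial.eval_add] using hp.add hq
  | monomial k a =>
      simpa [Polynomial.eval_monomial] using (contDiff_const (c := a)).mul (contDiff_id.pow k)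

private lemma iteratedDeriv_polyeval (P : Polynomial ℝ) (n : ℕ) :
    iteratedDeriv n (fun x : ℝ => P.eval x) = fun x => (derivative^[n] P).eval x := by
  induction n generalizing P with
  | zero => simp
  | succ n ih =>
      have hd : (deriv fun x : ℝ => Polynomial.eval x P) = fun x => (derivative P).eval x :=
        funext fun x => P.deriv
      rw [iteratedDeriv_succ', Function.iterate_succ_apply, ← ih (derivative P), hd]

private lemma iteratedDerivWithin_polyeval (P : Polynomial ℝ) (n : ℕ) {s : Set ℝ}
    (hs : UniqueDiffOn ℝ s) {x : ℝ} (hx : x ∈ s) :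
    iteratedDerivWithin n (fun y : ℝ => P.eval y) s x = (derivative^[n] P).eval x := by
  induction n generalizing P x with
  | zero => simp
  | succ n ih =>
      rw [iteratedDerivWithin_succ']
      have hEq : ∀ y ∈ s, derivWithin (fun z : ℝ => P.eval z) s y = (derivative P).eval y := by
        intro y hy
        exact ((P.hasDerivAt y).hasDerivWithinAt).derivWithin (hs y hy)
      calc iteratedDerivWithin n (derivWithin (fun z : ℝ => P.eval z) s) s x
          = iteratedDerivWithin n (fun z : ℝ => (derivative P).eval z) s x :=
            iteratedDerivWithin_congr (fun y hy => hEq y hy) hx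
        _ = (derivative^[n] (derivative P)).eval x := ih _ hx
        _ = (derivative^[n+1] P).eval x := by rw [← Function.iterate_succ_apply]

private lemma ibp_poly (a b : Polynomial ℝ) :
    ∫ x in (-1:ℝ)..1, a.eval x * (derivative b).eval x
      = a.eval 1 * b.eval 1 - a.eval (-1) * b.eval (-1)
        - ∫ x in (-1:ℝ)..1, (derivative a).eval x * b.eval x :=
  integral_mul_deriv_eq_deriv_mul (fun x _ => a.hasDerivAt x) (fun x _ => b.hasDerivAt x)
    ((Polynomial.continuous _).intervalIntegrable _ _)
    ((Polynomial.continuous _).intervalIntegrable _ _)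

private lemma ibp_chain (n : ℕ) :
    ∀ B : Polynomial ℝ, (∀ j, j < n → (derivative^[j] B).eval 1 = 0 ∧
        (derivative^[j] B).eval (-1) = 0) →
    ∀ r : Polynomial ℝ,
      ∫ x in (-1:ℝ)..1, (derivative^[n] B).eval x * r.eval x
        = (-1:ℝ)^n * ∫ x in (-1:ℝ)..1, B.eval x * (derivative^[n] r).eval x := by
  induction n with
  | zero => intro B _ r; simp
  | succ n ih =>
      intro B hb r
      have hb' : ∀ j, j < n → (derivative^[j] (derivative B)).eval 1 = 0 ∧
          (derivative^[j] (derivative B)).eval (-1) = 0 := by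
        intro j hj
        rw [← Function.iterate_succ_apply]
        exact hb (j+1) (by omega)
      have h0 := hb 0 (Nat.succ_pos n)
      simp only [Function.iterate_zero_apply] at h0
      have key := ih (derivative B) hb' r
      rw [Function.iterate_succ_apply, key]
      have h2 : ∫ x in (-1:ℝ)..1, (derivative B).eval x * (derivative^[n] r).eval x
          = - ∫ x in (-1:ℝ)..1, B.eval x * (derivative^[n+1] r).eval x := by
        have hibp := ibp_poly B (derivative^[n] r)
        rw [Function.iterate_succ_apply']
        rw [h0.1, h0.2] at hibp
        simp only [zero_mul, sub_zero, zero_sub] at hibp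
        linarith [hibp]
      rw [h2]
      ring

private lemma rodrigues_boundary (n j : ℕ) (hj : j < n) :
    (derivative^[j] (((X:Polynomial ℝ)^2 - 1)^n)).eval 1 = 0 ∧
      (derivative^[j] (((X:Polynomial ℝ)^2 - 1)^n)).eval (-1) = 0 := by
  obtain ⟨g, hg⟩ := Polynomial.pow_sub_dvd_iterate_derivative_pow ((X:Polynomial ℝ)^2 - 1) n j
  have hnj : n - j ≠ 0 := by omega
  rw [hg]
  constructor <;> simp [Polynomial.eval_mul, Polynomial.eval_pow, zero_pow hnj]

private lemma leg_orth {m : ℕ} {r : Polynomial ℝ} (hr : r.natDegree < m) :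
    ∫ x in (-1:ℝ)..1, (leg m).eval x * r.eval x = 0 := by
  have hchain := ibp_chain m (((X:Polynomial ℝ)^2 - 1)^m)
    (fun j hj => rodrigues_boundary m j hj) r
  have hz : derivative^[m] r = 0 := Polynomial.iterate_derivative_eq_zero hr
  have hev : ∀ x : ℝ, (leg m).eval x * r.eval x
      = ((1:ℝ) / (2 ^ m * m.factorial))
          * ((derivative^[m] (((X:Polynomial ℝ)^2 - 1)^m)).eval x * r.eval x) := by
    intro x
    rw [leg, Polynomial.eval_smul]
    simp [mul_assoc]
  simp only [hev]
  rw [intervalIntegral.integral_const_mul, hchain, hz]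
  simp

private lemma leg_natDegree_le (m : ℕ) : (leg m).natDegree ≤ m := by
  rw [leg]
  refine (Polynomial.natDegree_smul_le _ _).trans ?_
  refine (Polynomial.natDegree_iterate_derivative _ _).trans ?_
  have h1 : (((X:Polynomial ℝ)^2 - 1)^m).natDegree ≤ m * 2 := by
    refine Polynomial.natDegree_pow_le.trans ?_
    have : ((X:Polynomial ℝ)^2 - 1).natDegree ≤ 2 := by
      refine (Polynomial.natDegree_sub_le _ _).trans ?_
      simp [Polynomial.natDegree_X_pow]
    nlinarith
  omega

private lemma exists_antideriv (q : Polynomial ℝ) : ∃ H : Polynomial ℝ, derivative H = q := by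
  induction q using Polynomial.induction_on' with
  | add p q hp hq =>
      obtain ⟨a, ha⟩ := hp; obtain ⟨b, hb⟩ := hq
      exact ⟨a + b, by simp [ha, hb]⟩
  | monomial k a =>
      refine ⟨Polynomial.C (a / (k+1)) * X^(k+1), ?_⟩
      rw [Polynomial.derivative_C_mul, Polynomial.derivative_X_pow, ← mul_assoc,
        ← Polynomial.C_mul]
      have hk : ((k:ℝ) + 1) ≠ 0 := by positivity
      have hc : a / ((k:ℝ)+1) * (((k+1 : ℕ) : ℝ)) = a := by
        push_cast; rw [div_mul_cancel₀ _ hk]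
      rw [hc]
      simp [Polynomial.C_mul_X_pow_eq_monomial]

private lemma poly_of_iteratedDerivWithin :
    ∀ (n : ℕ) (f : ℝ → ℝ), ContDiffOn ℝ n f Iom →
      ∀ g : Polynomial ℝ, (∀ x ∈ Iom, iteratedDerivWithin n f Iom x = g.eval x) →
      ∃ G : Polynomial ℝ, ∀ x ∈ Iom, f x = G.eval x := by
  intro n
  induction n with
  | zero =>
      intro f _ g hg
      exact ⟨g, fun x hx => by simpa using hg x hx⟩
  | succ n ih =>
      intro f hf g hg
      have hud : UniqueDiffOn ℝ Iom := uniqueDiffOn_Icc (by norm_num)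
      have hf' : ContDiffOn ℝ n (derivWithin f Iom) Iom :=
        hf.derivWithin hud (by exact_mod_cast le_refl (n+1))
      have hg' : ∀ x ∈ Iom, iteratedDerivWithin n (derivWithin f Iom) Iom x = g.eval x := by
        intro x hx
        rw [← iteratedDerivWithin_succ']
        exact hg x hx
      obtain ⟨G', hG'⟩ := ih (derivWithin f Iom) hf' g hg'
      obtain ⟨H, hH⟩ := exists_antideriv G'
      refine ⟨H + Polynomial.C (f (-1) - H.eval (-1)), fun x hx => ?_⟩
      have hm1 : (-1:ℝ) ∈ Iom := by simp [Iom]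
      have hdiff : DifferentiableOn ℝ f Iom := by
        apply hf.differentiableOn
        exact_mod_cast Nat.succ_ne_zero n
      have hcont : ContinuousOn f (Set.Icc (-1) x) :=
        hf.continuousOn.mono (Set.Icc_subset_Icc le_rfl hx.2)
      have key : ∫ t in (-1:ℝ)..x, G'.eval t = f x - f (-1) := by
        apply intervalIntegral.integral_eq_sub_of_hasDeriv_right_of_le hx.1 hcont ?_
          ((Polynomial.continuous _).intervalIntegrable _ _)
        intro t ht
        have htI : t ∈ Iom := ⟨ht.1.le, (ht.2.trans_le hx.2).le⟩
        have h1 : HasDerivWithinAt f (derivWithin f Iom t) Iom t :=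
          (hdiff t htI).hasDerivWithinAt
        rw [← hG' t htI]
        refine h1.mono_of_mem_nhdsWithin ?_
        apply mem_nhdsWithin_of_mem_nhds
        exact Icc_mem_nhds ht.1 (ht.2.trans_le hx.2)
      have key2 : ∫ t in (-1:ℝ)..x, G'.eval t = H.eval x - H.eval (-1) := by
        apply intervalIntegral.integral_eq_sub_of_hasDerivAt
          (fun t _ => by simpa [hH] using H.hasDerivAt t)
          ((Polynomial.continuous _).intervalIntegrable _ _)
      simp only [Polynomial.eval_add, Polynomial.eval_C]
      linarith [key, key2]

end Aux


/-- If moreover `u^{(ν+1)} = q_{p,ν}` on `Ω`, then the trace bound of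
Statement 5 is attained with equality:
`|(u − π_p u)^{(ν)}(1)| = ‖q_{p,ν}‖₀ · |u|_{ν+1}`. -/
theorem trace_deriv_projection_error_sharp (p ν : ℕ) (hνp : ν ≤ p)
    (u P q : ℝ → ℝ) (hu : MemH (ν + 1) u) (hP : IsL2Proj p u P) (hq : IsQ p ν q)
    (hderiv : ∀ x ∈ Iom, iteratedDerivWithin (ν + 1) u Iom x = q x) :
    |iteratedDerivWithin ν (fun y => u y - P y) Iom 1| =
      Real.sqrt (nsq q) * Real.sqrt (semSq (ν + 1) u) := by
  classical
  obtain ⟨⟨Pq, hPdeg, hPeq⟩, horth⟩ := hP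
  obtain ⟨⟨c, hc⟩, hq1, hqm1, hqi⟩ := hq
  set Qp : Polynomial ℝ := ∑ m ∈ Finset.Icc (p - ν) (p + ν + 1), c m • leg m with hQp
  have hqQ : ∀ x, q x = Qp.eval x := by
    intro x
    rw [hc x, hQp]
    rw [Polynomial.eval_finset_sum]
    exact Finset.sum_congr rfl fun m _ => by rw [Polynomial.eval_smul]; rfl
  have hud : UniqueDiffOn ℝ Iom := uniqueDiffOn_Icc (by norm_num)
  have h1mem : (1:ℝ) ∈ Iom := by simp [Iom]
  -- u coincides with a polynomial U on Iom
  obtain ⟨U, hU⟩ := poly_of_iteratedDerivWithin (ν+1) u hu Qp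
    (fun x hx => (hderiv x hx).trans (hqQ x))
  have hinf : Iom.Infinite := Set.Icc_infinite (by norm_num)
  have hUq : derivative^[ν+1] U = Qp := by
    apply Polynomial.eq_of_infinite_eval_eq
    apply hinf.mono
    intro x hx
    have e1 : iteratedDerivWithin (ν+1) u Iom x
        = iteratedDerivWithin (ν+1) (fun y : ℝ => U.eval y) Iom x :=
      iteratedDerivWithin_congr (fun y hy => hU y hy) hx
    have e2 := iteratedDerivWithin_polyeval U (ν+1) hud hx
    have e3 := (hderiv x hx).trans (hqQ x)
    simp only [Set.mem_setOf_eq]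
    rw [← e2, ← e1, e3]
  set E : Polynomial ℝ := U - Pq with hE
  have hEu : ∀ y ∈ Iom, u y - P y = E.eval y := by
    intro y hy
    rw [hU y hy, hPeq y, hE, Polynomial.eval_sub]
  have hLHS : iteratedDerivWithin ν (fun y => u y - P y) Iom 1 = (derivative^[ν] E).eval 1 := by
    have h1 : iteratedDerivWithin ν (fun y => u y - P y) Iom 1
        = iteratedDerivWithin ν (fun y : ℝ => E.eval y) Iom 1 :=
      iteratedDerivWithin_congr (fun y hy => hEu y hy) h1mem
    rw [h1, iteratedDerivWithin_polyeval E ν hud h1mem]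
  -- boundary values
  have hiter : ∀ j, iteratedDeriv j q = fun x => (derivative^[j] Qp).eval x := by
    intro j
    rw [show q = fun x => Qp.eval x from funext hqQ]
    exact iteratedDeriv_polyeval Qp j
  have hQ1 : Qp.eval 1 = 1 := by rw [← hqQ 1]; exact hq1
  have hQm1 : Qp.eval (-1) = 0 := by rw [← hqQ (-1)]; exact hqm1
  have hQj : ∀ j, 1 ≤ j → j ≤ ν →
      (derivative^[j] Qp).eval 1 = 0 ∧ (derivative^[j] Qp).eval (-1) = 0 := by
    intro j hj1 hj2
    obtain ⟨ha, hb⟩ := hqi j hj1 hj2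
    rw [hiter j] at ha hb
    exact ⟨ha, hb⟩
  have hIcc : ∀ f : ℝ → ℝ, (∫ x in Iom, f x) = ∫ x in (-1:ℝ)..1, f x := by
    intro f
    rw [intervalIntegral.integral_of_le (by norm_num : (-1:ℝ) ≤ 1),
      show Iom = Set.Icc (-1:ℝ) 1 from rfl, MeasureTheory.integral_Icc_eq_integral_Ioc]
  -- the chain of integrations by parts
  set I : ℕ → ℝ := fun k =>
    ∫ x in (-1:ℝ)..1, (derivative^[k] Qp).eval x * (derivative^[ν+1-k] E).eval x with hI
  have hbase : I 0 = (derivative^[ν] E).eval 1 - I 1 := by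
    have hibp := ibp_poly Qp (derivative^[ν] E)
    have e1 : ν + 1 - 1 = ν := by omega
    rw [hI]
    simp only [Function.iterate_zero_apply, Nat.sub_zero, e1, Function.iterate_one]
    rw [show (ν + 1) = ν + 1 from rfl]
    simp only [Function.iterate_succ_apply']
    rw [hibp, hQ1, hQm1]
    ring
  have hIstep : ∀ k, 1 ≤ k → k ≤ ν → I k = - I (k+1) := by
    intro k h1 h2
    obtain ⟨hb1, hb2⟩ := hQj k h1 h2
    have hibp := ibp_poly (derivative^[k] Qp) (derivative^[ν-k] E)
    have e1 : ν + 1 - k = (ν - k) + 1 := by omega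
    have e2 : ν + 1 - (k+1) = ν - k := by omega
    rw [hI]
    simp only [e1, e2, Function.iterate_succ_apply']
    rw [hibp, hb1, hb2]
    ring
  have hchain : ∀ k, k ≤ ν → I 0 = (derivative^[ν] E).eval 1 + (-1:ℝ)^(k+1) * I (k+1) := by
    intro k
    induction k with
    | zero => intro _; rw [hbase]; ring
    | succ k ih =>
        intro hk
        have h1 := ih (by omega)
        rw [hIstep (k+1) (by omega) hk] at h1
        rw [h1]
        ring
  have hQdeg : Qp.natDegree ≤ p + ν + 1 := by
    rw [hQp]
    apply Polynomial.natDegree_sum_le_of_forall_le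
    intro m hm
    have hmle : m ≤ p + ν + 1 := (Finset.mem_Icc.mp hm).2
    calc (c m • leg m).natDegree ≤ (leg m).natDegree := Polynomial.natDegree_smul_le _ _
      _ ≤ m := leg_natDegree_le m
      _ ≤ p + ν + 1 := hmle
  have hIlast : I (ν+1) = 0 := by
    have hv : (derivative^[ν+1] Qp).natDegree ≤ p := by
      have := Polynomial.natDegree_iterate_derivative Qp (ν+1)
      omega
    have horth' := horth (derivative^[ν+1] Qp) hv
    have hcongr : ∀ x ∈ Iom, (derivative^[ν+1] Qp).eval x * E.eval x
        = -((P x - u x) * (derivative^[ν+1] Qp).eval x) := by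
      intro x hx
      rw [← hEu x hx]
      ring
    have e0 : ν + 1 - (ν + 1) = 0 := by omega
    rw [hI]
    simp only [e0, Function.iterate_zero_apply]
    rw [← hIcc]
    have hmeas : MeasurableSet Iom := show MeasurableSet (Set.Icc (-1:ℝ) 1) from measurableSet_Icc
    rw [MeasureTheory.setIntegral_congr_fun (s := Iom) hmeas hcongr]
    rw [MeasureTheory.integral_neg, horth', neg_zero]
  have hEder : derivative^[ν+1] E = Qp - derivative^[ν+1] Pq := by
    rw [hE, Polynomial.iterate_derivative_sub, hUq]
  have horthQ : ∫ x in (-1:ℝ)..1, Qp.eval x * (derivative^[ν+1] Pq).eval x = 0 := by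
    rcases eq_or_lt_of_le hνp with heq | hlt
    · have hz : derivative^[ν+1] Pq = 0 :=
        Polynomial.iterate_derivative_eq_zero (by omega)
      simp [hz]
    · set w := derivative^[ν+1] Pq with hw
      have hwdeg : w.natDegree < p - ν := by
        have h5 := Polynomial.natDegree_iterate_derivative Pq (ν+1)
        rw [← hw] at h5
        omega
      have hexp : ∀ x : ℝ, Qp.eval x * w.eval x
          = ∑ m ∈ Finset.Icc (p - ν) (p + ν + 1), c m * ((leg m).eval x * w.eval x) := by
        intro x
        rw [hQp, Polynomial.eval_finset_sum, Finset.sum_mul]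
        exact Finset.sum_congr rfl fun m _ => by rw [Polynomial.eval_smul]; simp [mul_assoc]
      simp only [hexp]
      rw [intervalIntegral.integral_finset_sum]
      · apply Finset.sum_eq_zero
        intro m hm
        rw [intervalIntegral.integral_const_mul,
          leg_orth (lt_of_lt_of_le hwdeg (Finset.mem_Icc.mp hm).1), mul_zero]
      · intro m _
        exact (((Polynomial.continuous (leg m)).mul (Polynomial.continuous w)).const_smul
          (c m)).intervalIntegrable _ _
  have hnsq : nsq q = ∫ x in (-1:ℝ)..1, Qp.eval x * Qp.eval x := by
    rw [nsq, hIcc]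
    apply intervalIntegral.integral_congr
    intro x _
    show q x ^ 2 = Qp.eval x * Qp.eval x
    rw [hqQ x]
    ring
  have hI0 : I 0 = nsq q := by
    rw [hI]
    simp only [Function.iterate_zero_apply, Nat.sub_zero, hEder]
    have hsplit : ∀ x : ℝ, Qp.eval x * (Qp - derivative^[ν+1] Pq).eval x
        = Qp.eval x * Qp.eval x - Qp.eval x * (derivative^[ν+1] Pq).eval x := by
      intro x
      rw [Polynomial.eval_sub]
      ring
    simp only [hsplit]
    rw [intervalIntegral.integral_sub (f := fun x => Qp.eval x * Qp.eval x)
      (g := fun x => Qp.eval x * (derivative^[ν+1] Pq).eval x)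
      (((Polynomial.continuous Qp).mul (Polynomial.continuous Qp)).intervalIntegrable _ _)
      (((Polynomial.continuous Qp).mul (Polynomial.continuous _)).intervalIntegrable _ _),
      horthQ, sub_zero, hnsq]
  have hfinal : (derivative^[ν] E).eval 1 = nsq q := by
    have h0 := hchain ν le_rfl
    rw [hIlast, mul_zero, add_zero] at h0
    rw [← h0, hI0]
  have hsem : semSq (ν+1) u = nsq q := by
    rw [semSq, nsq]
    have hmeas : MeasurableSet Iom := show MeasurableSet (Set.Icc (-1:ℝ) 1) from measurableSet_Icc
    apply MeasureTheory.setIntegral_congr_fun hmeas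
    intro x hx
    show iteratedDerivWithin (ν+1) u Iom x ^ 2 = q x ^ 2
    rw [hderiv x hx]
  have hnn : 0 ≤ nsq q := by
    rw [nsq]
    have hmeas : MeasurableSet Iom := show MeasurableSet (Set.Icc (-1:ℝ) 1) from measurableSet_Icc
    exact MeasureTheory.setIntegral_nonneg hmeas (fun x _ => sq_nonneg _)
  rw [hLHS, hfinal, hsem, Real.mul_self_sqrt hnn, abs_of_nonneg hnn]
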